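/- arXiv:1103.1035 — 2 statements merged into one kernel-verified Lean document; each statement's English description precedes it below -/
import Mathlib

section
/- Let g be a DG Lie algebra over a field K of characteristic 0, ω a Maurer-Cartan element, and a_ω := Coker(d_ω : g^{-2} → g^{-1}). Then the bracket [α₁, α₂]_ω := [d_ω(α₁), α₂] descends to a well-defined Lie bracket on a_ω, making a_ω a Lie algebra. In particular, for α ∈ g^{-1} and α' ∈ d_ω(g^{-2}), both [α, α']_ω and [α', α]_ω lie in d_ω(g^{-2}). -/
open scoped TensorProduct

/-- A (ℤ-graded) DG Lie algebra over a field `K` of characteristic `0`. -/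
structure DGLA (K : Type) [Field K] : Type 1 where
  L : Type
  [acg : AddCommGroup L]
  [mod : Module K L]
  grading : ℤ → Submodule K L
  isInternal : DirectSum.IsInternal grading
  d : L →ₗ[K] L
  d_sq : ∀ x, d (d x) = 0
  d_deg : ∀ (i : ℤ), ∀ x ∈ grading i, d x ∈ grading (i + 1)
  bracket : L →ₗ[K] L →ₗ[K] L
  bracket_deg : ∀ (i j : ℤ), ∀ x ∈ grading i, ∀ y ∈ grading j, bracket x y ∈ grading (i + j)
  bracket_antisymm : ∀ (i j : ℤ), ∀ x ∈ grading i, ∀ y ∈ grading j,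
    bracket x y = -(((Int.negOnePow (i * j) : ℤˣ) : ℤ) • bracket y x)
  bracket_jacobi : ∀ (i j k : ℤ), ∀ x ∈ grading i, ∀ y ∈ grading j, ∀ z ∈ grading k,
    ((Int.negOnePow (i * k) : ℤˣ) : ℤ) • bracket x (bracket y z)
      + ((Int.negOnePow (j * i) : ℤˣ) : ℤ) • bracket y (bracket z x)
      + ((Int.negOnePow (k * j) : ℤˣ) : ℤ) • bracket z (bracket x y) = 0
  d_leibniz : ∀ (i : ℤ), ∀ x ∈ grading i, ∀ y : L,
    d (bracket x y) = bracket (d x) y + ((Int.negOnePow i : ℤˣ) : ℤ) • bracket x (d y)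

attribute [instance] DGLA.acg DGLA.mod

namespace DGLA

variable {K : Type} [Field K] (g : DGLA K)

/-- The Maurer–Cartan condition: `ω ∈ g¹` and `d ω + ½[ω,ω] = 0`. -/
def IsMC (ω : g.L) : Prop :=
  ω ∈ g.grading 1 ∧ g.d ω + (2 : K)⁻¹ • g.bracket ω ω = 0

/-- The twisted differential `d_ω = d + ad(ω)`. -/
def dMC (ω : g.L) : g.L →ₗ[K] g.L := g.d + g.bracket ω

/-- Lower central series of the underlying graded Lie algebra. -/
def lcs : ℕ → Submodule K g.L
  | 0 => ⊤
  | n + 1 => Submodule.span K {z | ∃ x y, y ∈ lcs n ∧ z = g.bracket x y}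

/-- Nilpotency of a DG Lie algebra. -/
def IsNilpotent : Prop := ∃ n, g.lcs n = ⊥

end DGLA

/-- Truncated exponential `∑_{i<n} fⁱ/i!` of an endomorphism. -/
noncomputable def expN {K : Type} [Field K] {M : Type} [AddCommGroup M] [Module K M]
    (f : M →ₗ[K] M) (n : ℕ) : M →ₗ[K] M :=
  ∑ i ∈ Finset.range n, ((i.factorial : K)⁻¹) • f ^ i

/-- Truncated version of `(exp(f) - 1)/f`, namely `∑_{i<n} fⁱ/(i+1)!`. -/
noncomputable def expN' {K : Type} [Field K] {M : Type} [AddCommGroup M] [Module K M]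
    (f : M →ₗ[K] M) (n : ℕ) : M →ₗ[K] M :=
  ∑ i ∈ Finset.range n, (((i + 1).factorial : K)⁻¹) • f ^ i

/-- The gauge action `Af(exp γ)(ω) = exp(ad γ)(ω) + ((1 - exp(ad γ))/ad γ)(d γ)`,
with exponentials truncated at `n`. -/
noncomputable def DGLA.Af {K : Type} [Field K] (g : DGLA K) (γ : g.L) (n : ℕ) (ω : g.L) :
    g.L :=
  expN (g.bracket γ) n ω - expN' (g.bracket γ) n (g.d γ)

namespace Stmt6Aux
variable {K : Type} [Field K] [CharZero K] (g : DGLA K) (ω : g.L)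

lemma mem_of_eq {i j : ℤ} (h : i = j) {x : g.L} (hx : x ∈ g.grading i) : x ∈ g.grading j :=
  h ▸ hx

lemma dMC_apply (x : g.L) : g.dMC ω x = g.d x + g.bracket ω x := rfl

lemma dMC_deg (hω : g.IsMC ω) (i : ℤ) (x : g.L) (hx : x ∈ g.grading i) :
    g.dMC ω x ∈ g.grading (i + 1) := by
  rw [dMC_apply]
  refine add_mem (g.d_deg i x hx) (mem_of_eq g (by ring) (g.bracket_deg 1 i ω hω.1 x hx))

/-- `d_ω² = 0` on graded elements. -/
lemma dsq (hω : g.IsMC ω) (k : ℤ) (x : g.L) (hx : x ∈ g.grading k) :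
    g.dMC ω (g.dMC ω x) = 0 := by
  have hω1 := hω.1
  -- expand to [dω, x] + [ω,[ω,x]]
  have e1 : g.dMC ω (g.dMC ω x)
      = g.bracket (g.d ω) x + g.bracket ω (g.bracket ω x) := by
    have hd := g.d_leibniz 1 ω hω1 x
    have s1 : ((Int.negOnePow 1 : ℤˣ) : ℤ) = -1 := by decide
    rw [s1] at hd
    simp only [dMC_apply, map_add, g.d_sq x, hd]
    module
  rw [e1]
  -- 2[ω,[ω,x]] = [[ω,ω],x]
  have hωω : g.bracket ω ω ∈ g.grading 2 :=
    mem_of_eq g (by ring) (g.bracket_deg 1 1 ω hω1 ω hω1)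
  have J := g.bracket_jacobi 1 1 k ω hω1 ω hω1 x hx
  have A1 := g.bracket_antisymm k 1 x hx ω hω1
  have A2 := g.bracket_antisymm k 2 x hx (g.bracket ω ω) hωω
  rw [show (k * 2) = 2 * k by ring, Int.negOnePow_two_mul] at A2
  simp only [one_mul, mul_one] at J
  have s1 : ((Int.negOnePow 1 : ℤˣ) : ℤ) = -1 := by decide
  rw [s1] at J
  rw [mul_one] at A1
  rw [A1, A2] at J
  simp only [map_neg, map_zsmul, Units.val_one, one_smul] at J
  set u := g.bracket ω (g.bracket ω x) with hu
  set v := g.bracket (g.bracket ω ω) x with hv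
  have hvu : v = u + u := by
    rcases Int.units_eq_one_or (Int.negOnePow k) with h | h <;>
      rw [h] at J <;>
      simp only [Units.val_one, Units.val_neg, one_smul, neg_smul, neg_neg] at J
    · linear_combination (norm := abel) -J
    · linear_combination (norm := abel) J
  have hdω : g.d ω = -((2:K)⁻¹ • g.bracket ω ω) := eq_neg_of_add_eq_zero_left hω.2
  rw [hdω]
  simp only [map_neg, map_smul, LinearMap.neg_apply, LinearMap.smul_apply, ← hv]
  rw [hvu]
  match_scalars
  norm_num
/-- ad ω Leibniz for first argument of degree 0. -/
lemma ad_leib0 (hω : g.IsMC ω) (j : ℤ) (x y : g.L) (hx : x ∈ g.grading 0)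
    (hy : y ∈ g.grading j) :
    g.bracket ω (g.bracket x y)
      = g.bracket (g.bracket ω x) y + g.bracket x (g.bracket ω y) := by
  have hω1 := hω.1
  have hωx : g.bracket ω x ∈ g.grading 1 :=
    mem_of_eq g (by ring) (g.bracket_deg 1 0 ω hω1 x hx)
  have J := g.bracket_jacobi 1 0 j ω hω1 x hx y hy
  have A1 := g.bracket_antisymm j 1 y hy ω hω1
  have A2 := g.bracket_antisymm j 1 y hy (g.bracket ω x) hωx
  simp only [one_mul, mul_one, mul_zero, zero_mul, Int.negOnePow_zero, Units.val_one,
    one_smul] at J A1 A2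
  rw [A1, A2, map_neg, map_zsmul] at J
  rcases Int.units_eq_one_or (Int.negOnePow j) with h | h <;>
    rw [h] at J <;>
    simp only [Units.val_one, Units.val_neg, one_smul, neg_smul, neg_neg] at J
  · linear_combination (norm := abel) J
  · linear_combination (norm := abel) -J

/-- ad ω Leibniz for first argument of degree -1. -/
lemma ad_leibm1 (hω : g.IsMC ω) (j : ℤ) (x y : g.L) (hx : x ∈ g.grading (-1))
    (hy : y ∈ g.grading j) :
    g.bracket ω (g.bracket x y)
      = g.bracket (g.bracket ω x) y - g.bracket x (g.bracket ω y) := by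
  have hω1 := hω.1
  have hωx : g.bracket ω x ∈ g.grading 0 :=
    mem_of_eq g (by ring) (g.bracket_deg 1 (-1) ω hω1 x hx)
  have J := g.bracket_jacobi 1 (-1) j ω hω1 x hx y hy
  have A1 := g.bracket_antisymm j 1 y hy ω hω1
  have A2 := g.bracket_antisymm j 0 y hy (g.bracket ω x) hωx
  have s1 : ((Int.negOnePow (-1 * 1) : ℤˣ) : ℤ) = -1 := by decide
  have s2 : ((Int.negOnePow (-1 : ℤ) : ℤˣ) : ℤ) = -1 := by decide
  have s3 : ((Int.negOnePow (1 : ℤ) : ℤˣ) : ℤ) = -1 := by decide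
  rw [show j * (-1) = -j by ring, Int.negOnePow_neg] at J
  simp only [one_mul, mul_one, mul_zero, zero_mul, Int.negOnePow_zero, Units.val_one,
    one_smul, s1, s2, s3] at J A1 A2
  rw [A1, A2, map_neg, map_zsmul] at J
  rcases Int.units_eq_one_or (Int.negOnePow j) with h | h <;>
    rw [h] at J <;>
    simp only [Units.val_one, Units.val_neg, one_smul, neg_smul, neg_neg] at J
  · linear_combination (norm := abel) J
  · linear_combination (norm := abel) -J

/-- `d_ω` Leibniz for first argument of degree 0. -/
lemma dMC_leib0 (hω : g.IsMC ω) (j : ℤ) (x y : g.L) (hx : x ∈ g.grading 0)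
    (hy : y ∈ g.grading j) :
    g.dMC ω (g.bracket x y)
      = g.bracket (g.dMC ω x) y + g.bracket x (g.dMC ω y) := by
  have hd := g.d_leibniz 0 x hx y
  simp only [Int.negOnePow_zero, Units.val_one, one_smul] at hd
  simp only [dMC_apply, hd, ad_leib0 g ω hω j x y hx hy, map_add, LinearMap.add_apply]
  abel

/-- `d_ω` Leibniz for first argument of degree -1. -/
lemma dMC_leibm1 (hω : g.IsMC ω) (j : ℤ) (x y : g.L) (hx : x ∈ g.grading (-1))
    (hy : y ∈ g.grading j) :
    g.dMC ω (g.bracket x y)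
      = g.bracket (g.dMC ω x) y - g.bracket x (g.dMC ω y) := by
  have hd := g.d_leibniz (-1) x hx y
  have s1 : ((Int.negOnePow (-1) : ℤˣ) : ℤ) = -1 := by decide
  simp only [s1] at hd
  simp only [dMC_apply, hd, ad_leibm1 g ω hω j x y hx hy, map_add, LinearMap.add_apply]
  module

end Stmt6Aux

/-- the bracket `[α₁,α₂]_ω := [d_ω(α₁), α₂]` descends to a well-defined Lie
bracket on `a_ω := g⁻¹ / d_ω(g⁻²)`; in particular, for `α ∈ g⁻¹` and `α' ∈ d_ω(g⁻²)`,
both `[α,α']_ω` and `[α',α]_ω` lie in `d_ω(g⁻²)`. -/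
theorem stmt6 {K : Type} [Field K] [CharZero K] (g : DGLA K) (ω : g.L) (hω : g.IsMC ω) :
    let B : Submodule K g.L := Submodule.map (g.dMC ω) (g.grading (-2))
    let br : g.L → g.L → g.L := fun a b => g.bracket (g.dMC ω a) b
    (∀ α ∈ g.grading (-1), ∀ α' ∈ B, br α α' ∈ B ∧ br α' α ∈ B) ∧
    (∀ α₁ ∈ g.grading (-1), ∀ α₂ ∈ g.grading (-1), br α₁ α₂ ∈ g.grading (-1)) ∧
    (∀ α₁ α₁' α₂ α₂' : g.L, α₁ ∈ g.grading (-1) → α₁' ∈ g.grading (-1) →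
      α₂ ∈ g.grading (-1) → α₂' ∈ g.grading (-1) →
      α₁ - α₁' ∈ B → α₂ - α₂' ∈ B → br α₁ α₂ - br α₁' α₂' ∈ B) ∧
    (∀ α₁ ∈ g.grading (-1), ∀ α₂ ∈ g.grading (-1), br α₁ α₂ + br α₂ α₁ ∈ B) ∧
    (∀ α₁ ∈ g.grading (-1), ∀ α₂ ∈ g.grading (-1), ∀ α₃ ∈ g.grading (-1),
      br α₁ (br α₂ α₃) - br (br α₁ α₂) α₃ - br α₂ (br α₁ α₃) ∈ B) := by
  intro B br
  have hω1 := hω.1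
  have hDdeg := Stmt6Aux.dMC_deg g ω hω
  have hbr : ∀ a b : g.L, br a b = g.bracket (g.dMC ω a) b := fun a b => rfl
  have hBmem : ∀ y ∈ B, ∃ β ∈ g.grading (-2), g.dMC ω β = y := by
    rintro y ⟨β, hβ, rfl⟩; exact ⟨β, hβ, rfl⟩
  have key1 : ∀ α ∈ g.grading (-1), ∀ y ∈ B, g.bracket (g.dMC ω α) y ∈ B := by
    intro α hα y hy
    obtain ⟨β, hβ, rfl⟩ := hBmem y hy
    have hDα : g.dMC ω α ∈ g.grading 0 :=
      Stmt6Aux.mem_of_eq g (by ring) (hDdeg (-1) α hα)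
    refine ⟨g.bracket (g.dMC ω α) β,
      Stmt6Aux.mem_of_eq g (by ring) (g.bracket_deg 0 (-2) _ hDα β hβ), ?_⟩
    rw [Stmt6Aux.dMC_leib0 g ω hω (-2) _ β hDα hβ, Stmt6Aux.dsq g ω hω (-1) α hα]
    simp
  have key2 : ∀ y ∈ B, ∀ z : g.L, g.bracket (g.dMC ω y) z ∈ B := by
    intro y hy z
    obtain ⟨β, hβ, rfl⟩ := hBmem y hy
    rw [Stmt6Aux.dsq g ω hω (-2) β hβ]
    simp only [map_zero, LinearMap.zero_apply]; exact B.zero_mem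
  refine ⟨fun α hα α' hα' => ⟨key1 α hα α' hα', key2 α' hα' α⟩, ?_, ?_, ?_, ?_⟩
  · intro α₁ h1 α₂ h2
    rw [hbr]
    exact Stmt6Aux.mem_of_eq g (by ring)
      (g.bracket_deg 0 (-1) _ (Stmt6Aux.mem_of_eq g (by ring) (hDdeg (-1) α₁ h1)) α₂ h2)
  · intro α₁ α₁' α₂ α₂' h1 h1' h2 h2' hB1 hB2
    have e : br α₁ α₂ - br α₁' α₂'
        = g.bracket (g.dMC ω α₁) (α₂ - α₂') + g.bracket (g.dMC ω (α₁ - α₁')) α₂' := by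
      simp only [hbr, map_sub, LinearMap.sub_apply]
      abel
    rw [e]
    exact B.add_mem (key1 α₁ h1 _ hB2) (key2 _ hB1 α₂')
  · intro α₁ h1 α₂ h2
    refine ⟨g.bracket α₁ α₂,
      Stmt6Aux.mem_of_eq g (by ring) (g.bracket_deg (-1) (-1) α₁ h1 α₂ h2), ?_⟩
    rw [Stmt6Aux.dMC_leibm1 g ω hω (-1) α₁ α₂ h1 h2]
    have hDα₂ : g.dMC ω α₂ ∈ g.grading 0 :=
      Stmt6Aux.mem_of_eq g (by ring) (hDdeg (-1) α₂ h2)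
    have A := g.bracket_antisymm (-1) 0 α₁ h1 (g.dMC ω α₂) hDα₂
    have s : ((Int.negOnePow ((-1) * 0) : ℤˣ) : ℤ) = 1 := by decide
    rw [s, one_smul] at A
    rw [hbr, hbr, A]
    abel
  · intro α₁ h1 α₂ h2 α₃ h3
    have ha₁ : g.dMC ω α₁ ∈ g.grading 0 :=
      Stmt6Aux.mem_of_eq g (by ring) (hDdeg (-1) α₁ h1)
    have ha₂ : g.dMC ω α₂ ∈ g.grading 0 :=
      Stmt6Aux.mem_of_eq g (by ring) (hDdeg (-1) α₂ h2)
    have e2 : g.dMC ω (g.bracket (g.dMC ω α₁) α₂)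
        = g.bracket (g.dMC ω α₁) (g.dMC ω α₂) := by
      rw [Stmt6Aux.dMC_leib0 g ω hω (-1) _ α₂ ha₁ h2, Stmt6Aux.dsq g ω hω (-1) α₁ h1]
      simp
    have J := g.bracket_jacobi 0 0 (-1) (g.dMC ω α₁) ha₁ (g.dMC ω α₂) ha₂ α₃ h3
    have ha₁₂ : g.bracket (g.dMC ω α₁) (g.dMC ω α₂) ∈ g.grading 0 :=
      Stmt6Aux.mem_of_eq g (by ring) (g.bracket_deg 0 0 _ ha₁ _ ha₂)
    have A1 := g.bracket_antisymm (-1) 0 α₃ h3 (g.dMC ω α₁) ha₁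
    have A2 := g.bracket_antisymm (-1) 0 α₃ h3 (g.bracket (g.dMC ω α₁) (g.dMC ω α₂)) ha₁₂
    have s : ((Int.negOnePow ((-1) * 0) : ℤˣ) : ℤ) = 1 := by decide
    simp only [zero_mul, mul_zero, Int.negOnePow_zero, Units.val_one, one_smul, s] at J A1 A2
    rw [A1, A2, map_neg] at J
    have hz : br α₁ (br α₂ α₃) - br (br α₁ α₂) α₃ - br α₂ (br α₁ α₃) = 0 := by
      simp only [hbr, e2]
      linear_combination (norm := abel) J
    rw [hz]
    exact B.zero_mem
end

section
/- With R, m, n, R̄, g as above (m·n = 0), an element ω̄ ∈ MC(m̄ ⊗ g) lifts to an element of MC(m ⊗ g) if and only if the obstruction class o₂(ω̄) ∈ n ⊗ H²(g) vanishes. -/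
open scoped TensorProduct

namespace DGLA

variable {K : Type} [Field K]

/-- The differential extended to `R ⊗ g`. -/
noncomputable def extD (g : DGLA K) (R : Type) [CommRing R] [Algebra K R] :
    R ⊗[K] g.L →ₗ[K] R ⊗[K] g.L :=
  LinearMap.lTensor R g.d

/-- The Lie bracket extended `R`-bilinearly to `R ⊗ g`:
`[a ⊗ x, b ⊗ y] = (ab) ⊗ [x, y]`. -/
noncomputable def extBr (g : DGLA K) (R : Type) [CommRing R] [Algebra K R] :
    R ⊗[K] g.L →ₗ[K] R ⊗[K] g.L →ₗ[K] R ⊗[K] g.L :=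
  TensorProduct.curry
    ((TensorProduct.map (LinearMap.mul' K R) (TensorProduct.lift g.bracket)).comp
      (TensorProduct.tensorTensorTensorComm K R g.L R g.L).toLinearMap)

/-- The curvature `cur(ω) = d(ω) + ½[ω,ω]` on `R ⊗ g`. -/
noncomputable def curR (g : DGLA K) (R : Type) [CommRing R] [Algebra K R]
    (ω : R ⊗[K] g.L) : R ⊗[K] g.L :=
  g.extD R ω + algebraMap K R ((2 : K)⁻¹) • g.extBr R ω ω

/-- The submodule `I ⊗ gⁱ` of `R ⊗ g`, for an ideal `I ⊆ R`. -/
noncomputable def part (g : DGLA K) (R : Type) [CommRing R] [Algebra K R]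
    (I : Ideal R) (i : ℤ) : Submodule R (R ⊗[K] g.L) :=
  I • ((g.grading i).baseChange R)

/-- A homomorphism of DG Lie algebras. -/
structure Hom (g h : DGLA K) where
  f : g.L →ₗ[K] h.L
  comm_d : ∀ x, f (g.d x) = h.d (f x)
  comm_br : ∀ x y, f (g.bracket x y) = h.bracket (f x) (f y)
  map_grading : ∀ (i : ℤ), ∀ x ∈ g.grading i, f x ∈ h.grading i

/-- `φ : g → h` is a quasi-isomorphism: it induces isomorphisms on all cohomologies. -/
def Hom.IsQuasiIso {g h : DGLA K} (φ : Hom g h) : Prop :=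
  ∀ i : ℤ,
    (∀ y ∈ h.grading i, h.d y = 0 → ∃ x ∈ g.grading i, g.d x = 0 ∧
      ∃ z ∈ h.grading (i - 1), φ.f x - y = h.d z) ∧
    (∀ x ∈ g.grading i, g.d x = 0 → (∃ z ∈ h.grading (i - 1), φ.f x = h.d z) →
      ∃ w ∈ g.grading (i - 1), x = g.d w)

end DGLA

namespace DGLA

variable {K : Type} [Field K] (g : DGLA K) (R : Type) [CommRing R] [Algebra K R]

lemma extBr_tmul (r r' : R) (x y : g.L) :
    g.extBr R (r ⊗ₜ x) (r' ⊗ₜ y) = (r * r') ⊗ₜ g.bracket x y := rfl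

lemma extBr_smul_left (a : R) (t s : R ⊗[K] g.L) :
    g.extBr R (a • t) s = a • g.extBr R t s := by
  induction t using TensorProduct.induction_on with
  | zero => simp
  | tmul r x =>
    induction s using TensorProduct.induction_on with
    | zero => simp
    | tmul r' y =>
      rw [TensorProduct.smul_tmul', extBr_tmul, extBr_tmul, TensorProduct.smul_tmul',
        smul_eq_mul, smul_eq_mul, mul_assoc]
    | add s1 s2 h1 h2 => rw [map_add, map_add, h1, h2, smul_add]
  | add t1 t2 h1 h2 =>
    rw [smul_add, map_add, map_add, LinearMap.add_apply, LinearMap.add_apply, h1, h2, smul_add]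

lemma extBr_smul_right (a : R) (t s : R ⊗[K] g.L) :
    g.extBr R t (a • s) = a • g.extBr R t s := by
  induction t using TensorProduct.induction_on with
  | zero => simp
  | tmul r x =>
    induction s using TensorProduct.induction_on with
    | zero => simp
    | tmul r' y =>
      rw [TensorProduct.smul_tmul', extBr_tmul, extBr_tmul, TensorProduct.smul_tmul',
        smul_eq_mul, smul_eq_mul, mul_left_comm]
    | add s1 s2 h1 h2 => rw [smul_add, map_add, map_add, h1, h2, smul_add]
  | add t1 t2 h1 h2 =>
    rw [map_add, LinearMap.add_apply, LinearMap.add_apply, h1, h2, smul_add]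

lemma extBr_mem_right (J : Ideal R) (x : R ⊗[K] g.L) {y : R ⊗[K] g.L}
    (hy : y ∈ J • (⊤ : Submodule R (R ⊗[K] g.L))) :
    g.extBr R x y ∈ J • (⊤ : Submodule R (R ⊗[K] g.L)) := by
  refine Submodule.smul_induction_on hy (fun b hb s _ => ?_) (fun s t hs ht => ?_)
  · rw [extBr_smul_right]
    exact Submodule.smul_mem_smul hb Submodule.mem_top
  · rw [map_add]
    exact Submodule.add_mem _ hs ht

lemma extBr_eq_zero {I J : Ideal R} (hIJ : I * J = ⊥) {x y : R ⊗[K] g.L}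
    (hx : x ∈ I • (⊤ : Submodule R (R ⊗[K] g.L)))
    (hy : y ∈ J • (⊤ : Submodule R (R ⊗[K] g.L))) : g.extBr R x y = 0 := by
  have h : g.extBr R x y ∈ (I * J) • (⊤ : Submodule R (R ⊗[K] g.L)) := by
    rw [← Ideal.smul_eq_mul, Submodule.smul_assoc]
    refine Submodule.smul_induction_on hx (fun a ha t _ => ?_) (fun s t hs ht => ?_)
    · rw [extBr_smul_left]
      exact Submodule.smul_mem_smul ha (extBr_mem_right g R J t hy)
    · rw [map_add, LinearMap.add_apply]
      exact Submodule.add_mem _ hs ht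
  rw [hIJ, Submodule.bot_smul] at h
  simpa using h

lemma curR_add (a b : R ⊗[K] g.L)
    (h1 : g.extBr R a b = 0) (h2 : g.extBr R b a = 0) (h3 : g.extBr R b b = 0) :
    g.curR R (a + b) = g.curR R a + g.extD R b := by
  unfold curR
  have hbr : g.extBr R (a + b) (a + b) = g.extBr R a a := by
    simp only [map_add, LinearMap.add_apply, h1, h2, h3, add_zero, zero_add]
  rw [map_add, hbr]
  abel

lemma part_le_smul_top (I : Ideal R) (i : ℤ) :
    g.part R I i ≤ I • (⊤ : Submodule R (R ⊗[K] g.L)) :=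
  smul_mono_right I le_top

end DGLA

/-- with `m·n = 0`, an MC element `ω̄` of `m̄ ⊗ g` (represented by a lift
`ω ∈ m ⊗ g¹` whose curvature lies in `n ⊗ g`) lifts to an MC element of `m ⊗ g` iff the
obstruction class `o₂(ω̄) = [cur(ω)] ∈ n ⊗ H²(g)` vanishes, i.e. iff
`cur(ω) ∈ d(n ⊗ g¹)`. -/
theorem stmt9 {K : Type} [Field K] [CharZero K] (g : DGLA K)
    (R : Type) [CommRing R] [Algebra K R] [IsArtinianRing R] [IsLocalRing R]
    (hres : Function.Bijective (algebraMap K (R ⧸ IsLocalRing.maximalIdeal R)))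
    (n : Ideal R) (hmn : IsLocalRing.maximalIdeal R * n = ⊥)
    (ω : R ⊗[K] g.L) (hω : ω ∈ g.part R (IsLocalRing.maximalIdeal R) 1)
    (hmc : g.curR R ω ∈ n • (⊤ : Submodule R (R ⊗[K] g.L))) :
    (∃ ω' ∈ g.part R (IsLocalRing.maximalIdeal R) 1,
        ω - ω' ∈ g.part R n 1 ∧ g.curR R ω' = 0) ↔
      ∃ z ∈ g.part R n 1, g.curR R ω = g.extD R z := by
  set m := IsLocalRing.maximalIdeal R with hm
  have hnm : n * m = ⊥ := by rw [mul_comm]; exact hmn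
  have hcur0 : g.curR R 0 = 0 := by
    simp [DGLA.curR, DGLA.extD]
  by_cases hn : n ≤ m
  · -- main case
    have hωm : ω ∈ m • (⊤ : Submodule R (R ⊗[K] g.L)) := g.part_le_smul_top R m 1 hω
    constructor
    · rintro ⟨ω', hω'm, hz, hcur⟩
      refine ⟨ω - ω', hz, ?_⟩
      have hzn : ω - ω' ∈ n • (⊤ : Submodule R (R ⊗[K] g.L)) := g.part_le_smul_top R n 1 hz
      have hzm : ω - ω' ∈ m • (⊤ : Submodule R (R ⊗[K] g.L)) :=
        Submodule.smul_mono_left hn hzn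
      have hω'M : ω' ∈ m • (⊤ : Submodule R (R ⊗[K] g.L)) := g.part_le_smul_top R m 1 hω'm
      have key : g.curR R (ω' + (ω - ω')) = g.curR R ω' + g.extD R (ω - ω') :=
        g.curR_add R ω' (ω - ω') (g.extBr_eq_zero R hmn hω'M hzn)
          (g.extBr_eq_zero R hnm hzn hω'M) (g.extBr_eq_zero R hmn hzm hzn)
      rw [add_sub_cancel] at key
      rw [key, hcur, zero_add]
    · rintro ⟨z, hz, hdz⟩
      refine ⟨ω - z, ?_, ?_, ?_⟩
      · exact Submodule.sub_mem _ hω (Submodule.smul_mono_left hn hz)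
      · simpa using hz
      · have hzn : z ∈ n • (⊤ : Submodule R (R ⊗[K] g.L)) := g.part_le_smul_top R n 1 hz
        have hznm : (-z) ∈ n • (⊤ : Submodule R (R ⊗[K] g.L)) := Submodule.neg_mem _ hzn
        have hzm : (-z) ∈ m • (⊤ : Submodule R (R ⊗[K] g.L)) :=
          Submodule.smul_mono_left hn hznm
        have key : g.curR R (ω + (-z)) = g.curR R ω + g.extD R (-z) :=
          g.curR_add R ω (-z) (g.extBr_eq_zero R hmn hωm hznm)
            (g.extBr_eq_zero R hnm hznm hωm) (g.extBr_eq_zero R hmn hzm hznm)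
        rw [← sub_eq_add_neg] at key
        rw [key, map_neg, hdz]
        abel
  · -- degenerate case : n = ⊤, m = ⊥, ω = 0
    have hn' : n = ⊤ := by
      by_contra h
      exact hn (IsLocalRing.le_maximalIdeal h)
    have hm0 : m = ⊥ := by
      have := hmn
      rw [hn', Ideal.mul_top] at this
      exact this
    have hω0 : ω = 0 := by
      have h := hω
      rw [hm0] at h
      simpa [DGLA.part, Submodule.bot_smul] using h
    constructor
    · intro _
      refine ⟨0, Submodule.zero_mem _, ?_⟩
      rw [hω0, hcur0]
      exact (DGLA.extD g R).map_zero.symm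
    · intro _
      refine ⟨0, Submodule.zero_mem _, ?_, hcur0⟩
      rw [hω0]
      simp
end
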